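/- Under the greedy red/blue coloring of a 1324-avoiding permutation, the subsequence of blue entries avoids the pattern 213. -/
import Mathlib


inductive Letter | A | B | C | D
deriving DecidableEq

def NoCB (w : List Letter) : Prop :=
  List.Chain' (fun a b => ¬(a = Letter.C ∧ b = Letter.B)) w

noncomputable def hword (n : ℕ) : ℕ :=
  Nat.card {w : List Letter // w.length = n ∧ NoCB w}
def redCond (p : ℕ → ℕ) (c : List Bool) (i : ℕ) : Bool :=
  decide (¬ ∃ j < i, ∃ k < i, j < k ∧ c.getD j false = true ∧ c.getD k false = true ∧
      p j < p i ∧ p i < p k) &&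
  decide (¬ ∃ j < i, c.getD j false = false ∧ p j < p i)

def colorsAux (p : ℕ → ℕ) : ℕ → List Bool
  | 0 => []
  | i+1 => colorsAux p i ++ [redCond p (colorsAux p i) i]

/-- `isRed p i = true` iff the greedy procedure colors the entry in position `i` red. -/
def isRed (p : ℕ → ℕ) (i : ℕ) : Bool := (colorsAux p (i+1)).getD i false

/-- The type of the entry in position `i` of a permutation of `{0,...,n-1}`:
`A` = red left-to-right minimum of the red subsequence, `B` = other red,
`D` = blue right-to-left maximum of the blue subsequence, `C` = other blue. -/
def typeOf (n : ℕ) (p : ℕ → ℕ) (i : ℕ) : Letter :=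
  if isRed p i then
    if ∀ j < i, isRed p j = true → p i < p j then Letter.A else Letter.B
  else
    if ∀ j < n, i < j → isRed p j = false → p j < p i then Letter.D else Letter.C

def toNatFun {n : ℕ} (p : Equiv.Perm (Fin n)) : ℕ → ℕ :=
  fun i => if h : i < n then (p ⟨i, h⟩ : ℕ) else i

def Avoids1324 {n : ℕ} (p : Equiv.Perm (Fin n)) : Prop :=
  ¬ ∃ i₁ i₂ i₃ i₄ : Fin n, i₁ < i₂ ∧ i₂ < i₃ ∧ i₃ < i₄ ∧
    p i₁ < p i₃ ∧ p i₃ < p i₂ ∧ p i₂ < p i₄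

/-- The word `w(p)`: types by position. -/
def wWord {n : ℕ} (p : Equiv.Perm (Fin n)) (i : Fin n) : Letter :=
  typeOf n (toNatFun p) i

/-- The word `z(p)`: types by value. -/
def zWord {n : ℕ} (p : Equiv.Perm (Fin n)) (v : Fin n) : Letter :=
  typeOf n (toNatFun p) (p.symm v)


lemma colorsAux_length (f : ℕ → ℕ) : ∀ m, (colorsAux f m).length = m
  | 0 => rfl
  | m+1 => by simp [colorsAux, colorsAux_length f m]

lemma colorsAux_getD (f : ℕ → ℕ) {i m : ℕ} (h : i < m) :
    (colorsAux f m).getD i false = isRed f i := by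
  induction m with
  | zero => omega
  | succ m ih =>
    rcases Nat.lt_or_ge i m with h' | h'
    · rw [show colorsAux f (m+1) = colorsAux f m ++ [redCond f (colorsAux f m) m] from rfl,
        List.getD_append _ _ _ _ (by rw [colorsAux_length]; exact h')]
      exact ih h'
    · have : i = m := by omega
      subst this
      rfl

lemma isRed_eq (f : ℕ → ℕ) (i : ℕ) : isRed f i = redCond f (colorsAux f i) i := by
  show (colorsAux f i ++ [redCond f (colorsAux f i) i]).getD i false = _
  have h : i = (colorsAux f i).length := (colorsAux_length f i).symm
  conv_lhs => rw [show (colorsAux f i ++ [redCond f (colorsAux f i) i]).getD i false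
    = (colorsAux f i ++ [redCond f (colorsAux f i) i]).getD (colorsAux f i).length false from by rw [← h]]
  simp [List.getD_append_right]

lemma isRed_false_iff (f : ℕ → ℕ) (i : ℕ) :
    isRed f i = false ↔
      (∃ a b, a < b ∧ b < i ∧ isRed f a = true ∧ isRed f b = true ∧ f a < f i ∧ f i < f b) ∨
      (∃ a, a < i ∧ isRed f a = false ∧ f a < f i) := by
  rw [isRed_eq]
  unfold redCond
  rw [Bool.and_eq_false_iff]
  simp only [decide_eq_false_iff_not, not_not]
  constructor
  · rintro (⟨a, ha, b, hb, hab, hca, hcb, h1, h2⟩ | ⟨a, ha, hca, h1⟩)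
    · exact Or.inl ⟨a, b, hab, hb, by rwa [colorsAux_getD f ha] at hca,
        by rwa [colorsAux_getD f hb] at hcb, h1, h2⟩
    · exact Or.inr ⟨a, ha, by rwa [colorsAux_getD f ha] at hca, h1⟩
  · rintro (⟨a, b, hab, hb, hca, hcb, h1, h2⟩ | ⟨a, ha, hca, h1⟩)
    · exact Or.inl ⟨a, lt_trans hab hb, b, hb, hab, by rwa [colorsAux_getD f (lt_trans hab hb)],
        by rwa [colorsAux_getD f hb], h1, h2⟩
    · exact Or.inr ⟨a, ha, by rwa [colorsAux_getD f ha], h1⟩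

lemma red_no132 (f : ℕ → ℕ) {c : ℕ} (hc : isRed f c = true) :
    ∀ a b, a < b → b < c → isRed f a = true → isRed f b = true →
      f a < f c → f c < f b → False := by
  intro a b hab hbc hra hrb h1 h2
  rw [isRed_eq] at hc
  unfold redCond at hc
  rw [Bool.and_eq_true] at hc
  have := of_decide_eq_true hc.1
  exact this ⟨a, lt_trans hab hbc, b, hbc, hab, by rwa [colorsAux_getD f (lt_trans hab hbc)],
    by rwa [colorsAux_getD f hbc], h1, h2⟩

lemma toNatFun_lt {n : ℕ} (p : Equiv.Perm (Fin n)) {i : ℕ} (h : i < n) :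
    toNatFun p i = (p ⟨i, h⟩ : ℕ) := dif_pos h

lemma no1324 {n : ℕ} (p : Equiv.Perm (Fin n)) (hp : Avoids1324 p)
    {a b c d : ℕ} (hab : a < b) (hbc : b < c) (hcd : c < d) (hd : d < n)
    (h1 : toNatFun p a < toNatFun p c) (h2 : toNatFun p c < toNatFun p b)
    (h3 : toNatFun p b < toNatFun p d) : False := by
  have ha : a < n := by omega
  have hb : b < n := by omega
  have hc : c < n := by omega
  rw [toNatFun_lt p ha, toNatFun_lt p hc] at h1
  rw [toNatFun_lt p hc, toNatFun_lt p hb] at h2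
  rw [toNatFun_lt p hb, toNatFun_lt p hd] at h3
  exact hp ⟨⟨a, ha⟩, ⟨b, hb⟩, ⟨c, hc⟩, ⟨d, hd⟩, hab, hbc, hcd, h1, h2, h3⟩

lemma toNatFun_inj {n : ℕ} (p : Equiv.Perm (Fin n)) {a b : ℕ} (ha : a < n) (hb : b < n)
    (hne : a ≠ b) : toNatFun p a ≠ toNatFun p b := by
  rw [toNatFun_lt p ha, toNatFun_lt p hb]
  intro h
  exact hne (by simpa [Fin.ext_iff] using p.injective (Fin.val_injective h))

lemma mainLemma {n : ℕ} (p : Equiv.Perm (Fin n)) (hp : Avoids1324 p) :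
    ∀ μ i j k : ℕ, n * j + i ≤ μ → i < j → j < k → k < n →
      isRed (toNatFun p) i = false → isRed (toNatFun p) j = false →
      isRed (toNatFun p) k = false →
      toNatFun p j < toNatFun p i → toNatFun p i < toNatFun p k → False := by
  intro μ
  induction μ using Nat.strong_induction_on with
  | _ μ IH =>
  intro i j k hμ hij hjk hkn hbi hbj hbk hji hik
  set q := toNatFun p with hq
  have hin : i < n := by omega
  have hjn : j < n := by omega
  -- Step 1: every entry before i has value > q j
  have step1 : ∀ t, t < i → q j < q t := by
    intro t ht
    by_contra h
    have hne : q t ≠ q j := toNatFun_inj p (by omega) hjn (by omega)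
    have : q t < q j := by omega
    exact no1324 p hp ht hij hjk hkn this hji hik
  -- Step 2: no blue z < j with q z < q j
  have step2 : ∀ z, z < j → isRed q z = false → q z < q j → False := by
    intro z hz hbz hzj
    rcases lt_trichotomy z i with h | h | h
    · exact absurd (step1 z h) (by omega)
    · subst h; omega
    · exact IH (n * z + i) (by nlinarith) i z k le_rfl h (by omega) hkn hbi hbz hbk
        (by omega) hik
  -- Step 3: red pair for j
  have hj' := (isRed_false_iff q j).mp hbj
  rcases hj' with ⟨x', y', hxy', hy'j, hrx', hry', h1, h2⟩ | ⟨z, hz, hbz, hzj⟩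
  · -- x' > i
    have hx'i : i < x' := by
      rcases lt_trichotomy x' i with h | h | h
      · exact absurd (step1 x' h) (by omega)
      · exfalso; rw [h] at hrx'; rw [hrx'] at hbi; exact Bool.noConfusion hbi
      · exact h
    -- Step 4: q k < q y'
    have step4 : q k < q y' := by
      by_contra h
      have hne : q y' ≠ q k := toNatFun_inj p (by omega) hkn (by omega)
      rw [hq] at h hne
      exact no1324 p hp hxy' hy'j hjk hkn h1 h2 (by omega)
    -- Step 5: i's reason for being blue
    have hi' := (isRed_false_iff q i).mp hbi
    rcases hi' with ⟨x, y, hxy, hyi, hrx, hry, g1, g2⟩ | ⟨z, hz, hbz, hzi⟩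
    · -- red pair x < y < i with q x < q i < q y
      have hyy' : ¬ q y' < q y := by
        intro h
        exact red_no132 q hry' x y hxy (by omega) hrx hry (by omega) h
      have hne : q y ≠ q y' := toNatFun_inj p (by omega) (by omega) (by omega)
      have : q y < q y' := by omega
      exact no1324 p hp hxy hyi (by omega : i < y') (by omega) g1 g2 this
    · -- blue z < i with q z < q i
      have := step1 z hz
      exact IH (n * j + z) (by omega) z j k le_rfl (by omega) hjk hkn hbz hbj hbk
        (by omega) (by omega)
  · exact step2 z hz hbz hzj

/-- The blue subsequence of a 1324-avoiding permutation avoids 213. -/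
theorem stmt8 {n : ℕ} (p : Equiv.Perm (Fin n)) (hp : Avoids1324 p) :
    ∀ i j k : Fin n, i < j → j < k →
      isRed (toNatFun p) i = false → isRed (toNatFun p) j = false →
      isRed (toNatFun p) k = false →
      ¬(p j < p i ∧ p i < p k) := by
  intro i j k hij hjk hbi hbj hbk hcon
  obtain ⟨h1, h2⟩ := hcon
  have hkn : (k : ℕ) < n := k.isLt
  have e : ∀ m : Fin n, toNatFun p (m : ℕ) = (p m : ℕ) := by
    intro m
    rw [toNatFun_lt p m.isLt]
  have h1' : toNatFun p (j : ℕ) < toNatFun p (i : ℕ) := by rw [e, e]; exact h1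
  have h2' : toNatFun p (i : ℕ) < toNatFun p (k : ℕ) := by rw [e, e]; exact h2
  exact mainLemma p hp (n * j + i) i j k le_rfl hij hjk hkn hbi hbj hbk h1' h2'
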